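/- For every integer k ≥ 5 there exists a graph G on k(k−2) vertices such that G is Hamiltonian, the independence number of G is exactly k, and G contains no cycle of length k−1. (Such a graph is obtained from k pairwise disjoint cliques K₁, …, K_k, each on k−2 vertices, by adding one edge between K_i and K_{i+1} for each i, indices modulo k, so that these k added edges are pairwise vertex-disjoint.) -/

import Mathlib

namespace St18

open SimpleGraph List

/-! ### Generic walk-from-chain infrastructure -/

variable {V : Type} {G : SimpleGraph V}

/-- Build a walk from a `List.Chain` of adjacencies. -/
def fromChain : {u : V} → (l : List V) → List.Chain G.Adj u l → G.Walk u (l.getLastD u)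
  | _, [], _ => Walk.nil
  | _, _ :: l, h =>
      (Walk.cons (List.chain_cons.mp h).1 (fromChain l (List.chain_cons.mp h).2)).copy
        rfl List.getLastD_cons.symm

lemma fromChain_support {u : V} (l : List V) (h : List.Chain G.Adj u l) :
    (fromChain l h).support = u :: l := by
  induction l generalizing u with
  | nil => rfl
  | cons b l ih =>
    simp only [fromChain, Walk.support_copy, Walk.support_cons]
    exact congrArg (u :: ·) (ih _)

lemma getLast_not_mem_dropLast (l : List V) (h : l.Nodup) (hne : l ≠ []) :
    l.getLast hne ∉ l.dropLast := by
  intro hm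
  have heq := List.dropLast_append_getLast hne
  rw [← heq] at h
  exact (List.disjoint_of_nodup_append h) hm (List.mem_singleton_self _)

/-- A nonnil closed walk of length ≥ 3 with nodup internal vertices is a cycle. -/
lemma closed_isCycle {u : V} (w : G.Walk u u)
    (hn : w.support.tail.Nodup) (hl : 3 ≤ w.length) : w.IsCycle := by
  cases w with
  | nil => simp at hl
  | @cons _ b _ h p =>
    rw [SimpleGraph.Walk.cons_isCycle_iff]
    have hsupp : p.support.Nodup := by simpa using hn
    refine ⟨SimpleGraph.Walk.IsPath.mk' hsupp, ?_⟩
    intro he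
    rw [SimpleGraph.Walk.edges, List.mem_map] at he
    obtain ⟨d, hd, hde⟩ := he
    rw [SimpleGraph.Dart.edge, Sym2.eq_iff] at hde
    rcases hde with ⟨h1, h2⟩ | ⟨h1, h2⟩
    · -- d = (u, b): u occurs in dropLast of p.support, but u is the last vertex
      have hu : u ∈ p.support.dropLast := by
        rw [← SimpleGraph.Walk.map_fst_darts]
        exact List.mem_map.2 ⟨d, hd, h1⟩
      have hlast : p.support.getLast (by simp) = u := p.getLast_support
      have := getLast_not_mem_dropLast p.support hsupp (by simp)
      rw [hlast] at this
      exact this hu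
    · -- d = (b, u)
      cases p with
      | nil => exact (G.loopless.irrefl u h)
      | @cons _ c _ h' q =>
        rcases (List.mem_cons.mp hd) with rfl | hdq
        · -- first dart: then c = u and q : Walk u u with nodup support
          have hcu : c = u := h2
          subst hcu
          have hq : q.IsPath := SimpleGraph.Walk.IsPath.mk' (by simpa using (List.nodup_cons.mp (by simpa using hsupp)).2)
          have : q = Walk.nil := SimpleGraph.Walk.isPath_iff_eq_nil.mp hq
          subst this
          simp [SimpleGraph.Walk.length_cons] at hl
        · -- d in q.darts: then b ∈ q.support, but b is the head of p.support
          have hb : b ∈ q.support.dropLast := by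
            rw [← SimpleGraph.Walk.map_fst_darts]
            exact List.mem_map.2 ⟨d, hdq, h1⟩
          have hb' : b ∈ q.support := List.dropLast_subset _ hb
          have : b ∉ q.support := by
            have := hsupp
            rw [SimpleGraph.Walk.support_cons] at this
            exact (List.nodup_cons.mp this).1
          exact this hb'

/-- Telescoping sum over the darts of a walk. -/
lemma dart_sum {A : Type} [AddCommGroup A] (f : V → A) :
    ∀ {u v : V} (w : G.Walk u v),
      (w.darts.map (fun d => f d.toProd.2 - f d.toProd.1)).sum = f v - f u
  | _, _, Walk.nil => by simp
  | _, _, Walk.cons h p => by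
    simp only [Walk.darts_cons, List.map_cons, List.sum_cons, dart_sum f p]
    abel

lemma sum_ind {β : Type} [DecidableEq β] (f : V → β) (b : β) :
    ∀ (l : List V), (l.map f).Nodup →
      (l.map fun a => if f a = b then (1 : ZMod 2) else 0).sum
        = if b ∈ l.map f then 1 else 0
  | [], _ => by simp
  | a :: l, h => by
    have h' : f a ∉ l.map f ∧ (l.map f).Nodup := by
      rw [List.map_cons, List.nodup_cons] at h; exact h
    rw [List.map_cons, List.map_cons, List.sum_cons, sum_ind f b l h'.2]
    by_cases hab : f a = b
    · have : b ∉ l.map f := hab ▸ h'.1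
      simp [hab, this]
    · simp [hab, Ne.symm hab]

lemma sum_map_add' {A : Type} [AddCommGroup A] (g h : V → A) :
    ∀ (l : List V), (l.map fun a => g a + h a).sum = (l.map g).sum + (l.map h).sum
  | [] => by simp
  | a :: l => by
    simp only [List.map_cons, List.sum_cons, sum_map_add' g h l]
    abel


/-! ### Nat helper lemmas -/

lemma succ_mod_div_lt {t n : ℕ} (h : t % n + 1 < n) :
    (t + 1) % n = t % n + 1 ∧ (t + 1) / n = t / n := by
  have h0 : 0 < n := by omega
  have ht := Nat.div_add_mod t n
  constructor
  · conv_lhs => rw [← ht]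
    rw [show n * (t / n) + t % n + 1 = t % n + 1 + t / n * n by ring]
    rw [Nat.add_mul_mod_self_right, Nat.mod_eq_of_lt h]
  · conv_lhs => rw [← ht]
    rw [show n * (t / n) + t % n + 1 = t % n + 1 + t / n * n by ring]
    rw [Nat.add_mul_div_right _ _ h0, Nat.div_eq_of_lt h, Nat.zero_add]

lemma succ_mod_div_eq {t n : ℕ} (h0 : 0 < n) (h : t % n + 1 = n) :
    (t + 1) % n = 0 ∧ (t + 1) / n = t / n + 1 := by
  have ht := Nat.div_add_mod t n
  have he : t + 1 = (t / n + 1) * n := by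
    have : n * (t / n) + t % n = t := ht
    nlinarith [this]
  rw [he, Nat.mul_mod_left, Nat.mul_div_cancel _ h0]
  exact ⟨rfl, rfl⟩

/-! ### The graph -/


section Graph

variable (k n : ℕ) [NeZero k]

/-- `k` cliques of size `n` in a ring, joined by `k` pairwise disjoint bridge
edges `(i,1) — (i+1,0)`. -/
def stG : SimpleGraph (Fin k × Fin n) where
  Adj x y := (x.1 = y.1 ∧ x.2 ≠ y.2) ∨
             (y.1 = x.1 + 1 ∧ x.2.val = 1 ∧ y.2.val = 0) ∨
             (x.1 = y.1 + 1 ∧ x.2.val = 0 ∧ y.2.val = 1)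
  symm := by
    constructor
    rintro x y (⟨h1, h2⟩ | ⟨h1, h2, h3⟩ | ⟨h1, h2, h3⟩)
    · exact Or.inl ⟨h1.symm, h2.symm⟩
    · exact Or.inr (Or.inr ⟨h1, h3, h2⟩)
    · exact Or.inr (Or.inl ⟨h1, h3, h2⟩)
  loopless := by
    constructor
    rintro x (⟨h1, h2⟩ | ⟨h1, h2, h3⟩ | ⟨h1, h2, h3⟩) <;> omega

end Graph


section Graph2

variable (k n : ℕ) [NeZero k]

lemma fin_succ_ne (hk : 5 ≤ k) (c : Fin k) : c ≠ c + 1 := by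
  intro he
  have h1 := left_eq_add.mp he
  have h2 : (1 : Fin k).val = 0 := by rw [h1]; rfl
  rw [Fin.val_one'] at h2
  rw [Nat.mod_eq_of_lt (by omega)] at h2
  exact one_ne_zero h2

lemma fin_val_add_one (hk : 5 ≤ k) (c : Fin k) : (c + 1).val = (c.val + 1) % k := by
  rw [Fin.val_add, Fin.val_one', show (1 : ℕ) % k = 1 from Nat.mod_eq_of_lt (by omega)]

/-- The `k` bridge edges. -/
def bridge (hn : 3 ≤ n) (c : Fin k) : Sym2 (Fin k × Fin n) :=
  s((c, ⟨1, by omega⟩), (c + 1, ⟨0, by omega⟩))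

lemma bridge_inj (hk : 5 ≤ k) (hn : 3 ≤ n) {c c' : Fin k} :
    bridge k n hn c = bridge k n hn c' ↔ c = c' := by
  constructor
  · intro h
    rw [bridge, bridge, Sym2.eq_iff] at h
    rcases h with ⟨h1, _⟩ | ⟨h1, _⟩
    · exact congrArg Prod.fst h1
    · exfalso
      have := congrArg (fun p => p.2.val) h1
      simp at this
  · rintro rfl; rfl

lemma not_bridge_of_same (hk : 5 ≤ k) (hn : 3 ≤ n) {x y : Fin k × Fin n}
    (h : x.1 = y.1) (c : Fin k) : s(x, y) ≠ bridge k n hn c := by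
  intro he
  rw [bridge, Sym2.eq_iff] at he
  rcases he with ⟨h1, h2⟩ | ⟨h1, h2⟩
  · rw [h1, h2] at h
    exact fin_succ_ne k hk c h
  · rw [h1, h2] at h
    exact fin_succ_ne k hk c h.symm

lemma edge_eq_bridge2 (hn : 3 ≤ n) {x y : Fin k × Fin n}
    (h1 : y.1 = x.1 + 1) (h2 : x.2.val = 1) (h3 : y.2.val = 0) :
    s(x, y) = bridge k n hn x.1 := by
  obtain ⟨x1, x2⟩ := x
  obtain ⟨y1, y2⟩ := y
  have h1' : y1 = x1 + 1 := h1
  have h2' : x2 = ⟨1, by omega⟩ := Fin.ext h2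
  have h3' : y2 = ⟨0, by omega⟩ := Fin.ext h3
  subst h1'
  rw [h2', h3']
  rfl

lemma edge_eq_bridge3 (hn : 3 ≤ n) {x y : Fin k × Fin n}
    (h1 : x.1 = y.1 + 1) (h2 : x.2.val = 0) (h3 : y.2.val = 1) :
    s(x, y) = bridge k n hn y.1 := by
  obtain ⟨x1, x2⟩ := x
  obtain ⟨y1, y2⟩ := y
  have h1' : x1 = y1 + 1 := h1
  have h2' : x2 = ⟨0, by omega⟩ := Fin.ext h2
  have h3' : y2 = ⟨1, by omega⟩ := Fin.ext h3
  subst h1'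
  rw [h2', h3']
  exact Sym2.eq_swap

/-- Indicator of the cut `{v | v.1.val ≤ i}`. -/
def fI (i : ℕ) (v : Fin k × Fin n) : ZMod 2 := if v.1.val ≤ i then 0 else 1

lemma dart_val (hk : 5 ≤ k) (hn : 3 ≤ n) (i : ℕ) (hi : i < k - 1) (d : (stG k n).Dart) :
    fI k n i d.toProd.2 - fI k n i d.toProd.1 =
      (if d.edge = bridge k n hn ⟨i, by omega⟩ then 1 else 0) +
      (if d.edge = bridge k n hn ⟨k - 1, by omega⟩ then 1 else 0) := by
  obtain ⟨⟨x, y⟩, hadj⟩ := d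
  have hedge : SimpleGraph.Dart.edge ⟨(x, y), hadj⟩ = s(x, y) := rfl
  rcases hadj with ⟨h1, h2⟩ | ⟨h1, h2, h3⟩ | ⟨h1, h2, h3⟩
  · have h1' : x.1 = y.1 := h1
    rw [hedge, if_neg (not_bridge_of_same k n hk hn h1' _),
      if_neg (not_bridge_of_same k n hk hn h1' _)]
    simp [fI, h1']
  · have h1' : y.1 = x.1 + 1 := h1
    simp only [hedge, edge_eq_bridge2 k n hn h1 h2 h3, bridge_inj k n hk hn,
      Fin.ext_iff, fI, h1', fin_val_add_one k hk]
    set c := x.1.val with hc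
    have hck : c < k := x.1.isLt
    by_cases hk1 : c = k - 1
    · have hm : (c + 1) % k = 0 := by
        rw [hk1, Nat.sub_add_cancel (by omega), Nat.mod_self]
      rw [hm, if_pos (Nat.zero_le i), if_neg (by omega : ¬ c ≤ i),
        if_neg (by omega : ¬ c = i), if_pos hk1]
      decide
    · have hm : (c + 1) % k = c + 1 := Nat.mod_eq_of_lt (by omega)
      rw [hm, if_neg hk1]
      by_cases hci : c = i
      · rw [if_pos hci, if_neg (by omega : ¬ c + 1 ≤ i), if_pos (by omega : c ≤ i)]
        decide
      · rw [if_neg hci]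
        by_cases hle : c ≤ i
        · rw [if_pos (by omega : c + 1 ≤ i), if_pos hle]; decide
        · rw [if_neg (by omega : ¬ c + 1 ≤ i), if_neg hle]; decide
  · have h1' : x.1 = y.1 + 1 := h1
    simp only [hedge, edge_eq_bridge3 k n hn h1 h2 h3, bridge_inj k n hk hn,
      Fin.ext_iff, fI, h1', fin_val_add_one k hk]
    set c := y.1.val with hc
    have hck : c < k := y.1.isLt
    by_cases hk1 : c = k - 1
    · have hm : (c + 1) % k = 0 := by
        rw [hk1, Nat.sub_add_cancel (by omega), Nat.mod_self]
      rw [hm, if_neg (by omega : ¬ c ≤ i), if_pos (Nat.zero_le i),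
        if_neg (by omega : ¬ c = i), if_pos hk1]
      decide
    · have hm : (c + 1) % k = c + 1 := Nat.mod_eq_of_lt (by omega)
      rw [hm, if_neg hk1]
      by_cases hci : c = i
      · rw [if_pos hci, if_pos (by omega : c ≤ i), if_neg (by omega : ¬ c + 1 ≤ i)]
        decide
      · rw [if_neg hci]
        by_cases hle : c ≤ i
        · rw [if_pos hle, if_pos (by omega : c + 1 ≤ i)]; decide
        · rw [if_neg hle, if_neg (by omega : ¬ c + 1 ≤ i)]; decide

lemma bridge_parity (hk : 5 ≤ k) (hn : 3 ≤ n) {u : Fin k × Fin n}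
    (w : (stG k n).Walk u u) (hc : w.IsCycle) (i : ℕ) (hi : i < k - 1) :
    (bridge k n hn ⟨i, by omega⟩ ∈ w.edges ↔ bridge k n hn ⟨k - 1, by omega⟩ ∈ w.edges) := by
  have h0 := dart_sum (G := stG k n) (fI k n i) w
  rw [sub_self] at h0
  have hfun : (fun d : (stG k n).Dart => fI k n i d.toProd.2 - fI k n i d.toProd.1)
      = fun d => (if d.edge = bridge k n hn ⟨i, by omega⟩ then 1 else 0) +
                 (if d.edge = bridge k n hn ⟨k - 1, by omega⟩ then 1 else 0) :=
    funext (dart_val k n hk hn i hi)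
  rw [hfun, sum_map_add'] at h0
  have hnd : (w.darts.map SimpleGraph.Dart.edge).Nodup := hc.isTrail.edges_nodup
  rw [sum_ind SimpleGraph.Dart.edge _ _ hnd, sum_ind SimpleGraph.Dart.edge _ _ hnd] at h0
  have hE : w.edges = w.darts.map SimpleGraph.Dart.edge := rfl
  rw [hE]
  constructor
  · intro hm
    by_contra hm2
    rw [if_pos hm, if_neg hm2] at h0
    exact absurd h0 (by decide)
  · intro hm
    by_contra hm2
    rw [if_neg hm2, if_pos hm] at h0
    exact absurd h0 (by decide)

lemma same_clique (hk : 5 ≤ k) (hn : 3 ≤ n) {u v : Fin k × Fin n}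
    (p : (stG k n).Walk u v) (hb : ∀ c, bridge k n hn c ∉ p.edges) :
    ∀ x ∈ p.support, x.1 = u.1 := by
  induction p with
  | nil =>
    intro x hx
    rw [SimpleGraph.Walk.support_nil, List.mem_singleton] at hx
    rw [hx]
  | @cons a b c h q ih =>
    have hedges : ∀ c, bridge k n hn c ∉ q.edges := by
      intro c hc
      exact hb c (by rw [SimpleGraph.Walk.edges_cons]; exact List.mem_cons_of_mem _ hc)
    have hab : b.1 = a.1 := by
      rcases h with ⟨h1, _⟩ | ⟨h1, h2, h3⟩ | ⟨h1, h2, h3⟩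
      · exact h1.symm
      · exact absurd (by
          exact List.mem_cons_self) ((edge_eq_bridge2 k n hn h1 h2 h3) ▸ hb a.1)
      · exact absurd (by
          exact List.mem_cons_self) ((edge_eq_bridge3 k n hn h1 h2 h3) ▸ hb b.1)
    intro x hx
    rw [SimpleGraph.Walk.support_cons] at hx
    rcases List.mem_cons.mp hx with rfl | hx
    · rfl
    · rw [ih hedges x hx, hab]

lemma no_cycle (hk : 5 ≤ k) (hn : 3 ≤ n) (hnk : n = k - 2) :
    ¬ ∃ (u : Fin k × Fin n) (w : (stG k n).Walk u u), w.IsCycle ∧ w.length = k - 1 := by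
  rintro ⟨u, w, hc, hlen⟩
  by_cases hbr : bridge k n hn ⟨k - 1, by omega⟩ ∈ w.edges
  · have hall : ∀ c : Fin k, bridge k n hn c ∈ w.edges := by
      intro c
      by_cases hck : c.val = k - 1
      · rwa [show c = ⟨k - 1, by omega⟩ from Fin.ext hck]
      · have hlt : c.val < k - 1 := by have := c.isLt; omega
        have h2 := (bridge_parity k n hk hn w hc c.val hlt).mpr hbr
        rwa [show (⟨c.val, by omega⟩ : Fin k) = c from Fin.ext rfl] at h2
    have hinj : Function.Injective (bridge k n hn) :=
      fun a b hab => (bridge_inj k n hk hn).mp hab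
    have hsub : Finset.univ.image (bridge k n hn) ⊆ w.edges.toFinset := by
      intro e he
      rw [Finset.mem_image] at he
      obtain ⟨c, _, rfl⟩ := he
      exact List.mem_toFinset.mpr (hall c)
    have hcard : k ≤ w.edges.toFinset.card := by
      calc k = (Finset.univ.image (bridge k n hn)).card := by
              rw [Finset.card_image_of_injective _ hinj, Finset.card_univ, Fintype.card_fin]
        _ ≤ _ := Finset.card_le_card hsub
    have h1 := w.edges.toFinset_card_le
    have h2 : w.edges.length = w.length := w.length_edges
    omega
  · have hnone : ∀ c : Fin k, bridge k n hn c ∉ w.edges := by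
      intro c hcm
      by_cases hck : c.val = k - 1
      · exact hbr (by rwa [show c = ⟨k - 1, by omega⟩ from Fin.ext hck] at hcm)
      · have hlt : c.val < k - 1 := by have := c.isLt; omega
        apply hbr
        apply (bridge_parity k n hk hn w hc c.val hlt).mp
        rwa [show (⟨c.val, by omega⟩ : Fin k) = c from Fin.ext rfl]
    have hsame := same_clique k n hk hn w hnone
    have htail : w.support.tail.Nodup := hc.support_nodup
    have hsub : ∀ x ∈ w.support.tail, x ∈ Finset.univ.image (fun j : Fin n => (u.1, j)) := by
      intro x hx
      have h1 := hsame x (List.mem_of_mem_tail hx)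
      rw [Finset.mem_image]
      exact ⟨x.2, Finset.mem_univ _, Prod.ext h1.symm rfl⟩
    have hlen2 : w.support.tail.length ≤ n := by
      have h1 : w.support.tail.toFinset.card = w.support.tail.length :=
        List.toFinset_card_of_nodup htail
      have h2 : w.support.tail.toFinset ⊆ Finset.univ.image (fun j : Fin n => (u.1, j)) :=
        fun x hx => hsub x (List.mem_toFinset.mp hx)
      have h3 := Finset.card_le_card h2
      have h4 : (Finset.univ.image (fun j : Fin n => (u.1, j))).card = n := by
        rw [Finset.card_image_of_injective _ (fun a b hab => by
          simpa using (Prod.ext_iff.mp hab).2), Finset.card_univ, Fintype.card_fin]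
      omega
    have h5 := w.length_support
    have h6 : w.support.tail.length = w.support.length - 1 := by
      simp [List.length_tail]
    omega

end Graph2


section Indep

variable (k n : ℕ) [NeZero k]

lemma indep_greatest (hk : 5 ≤ k) (hn : 3 ≤ n) :
    IsGreatest {m : ℕ | ∃ s : Finset (Fin k × Fin n),
      (∀ u ∈ s, ∀ v ∈ s, u ≠ v → ¬ (stG k n).Adj u v) ∧ s.card = m} k := by
  constructor
  · refine ⟨Finset.univ.image (fun i : Fin k => (i, (⟨2, by omega⟩ : Fin n))), ?_, ?_⟩
    · intro u hu v hv huv hadj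
      rw [Finset.mem_image] at hu hv
      obtain ⟨a, _, rfl⟩ := hu
      obtain ⟨b, _, rfl⟩ := hv
      rcases hadj with ⟨h1, h2⟩ | ⟨h1, h2, h3⟩ | ⟨h1, h2, h3⟩
      · exact h2 rfl
      · have : (2 : ℕ) = 1 := h2
        omega
      · have : (2 : ℕ) = 1 := h3
        omega
    · rw [Finset.card_image_of_injective _ (fun a b hab => congrArg Prod.fst hab),
        Finset.card_univ, Fintype.card_fin]
  · rintro m ⟨s, hind, rfl⟩
    have hle : s.card ≤ (Finset.univ : Finset (Fin k)).card := by
      apply Finset.card_le_card_of_injOn Prod.fst (fun x _ => Finset.mem_univ _)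
      intro x hx y hy hxy
      by_contra hne
      exact hind x hx y hy hne (Or.inl ⟨hxy, fun h2 => hne (Prod.ext hxy h2)⟩)
    simpa using hle

end Indep

section Ham

/-- Position of step `r` within a clique traversal: `0, n-1, n-2, …, 1`. -/
def pos (n r : ℕ) : ℕ := if r = 0 then 0 else n - r

lemma pos_lt (n r : ℕ) (hn : 0 < n) : pos n r < n := by
  unfold pos; split <;> omega

lemma pos_inj (n : ℕ) {a b : ℕ} (ha : a < n) (hb : b < n)
    (h : pos n a = pos n b) : a = b := by
  unfold pos at h; split at h <;> split at h <;> omega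

variable (k n : ℕ) [NeZero k]

/-- The `t`-th vertex of the Hamilton cycle. -/
def sig (hk0 : 0 < k) (hn0 : 0 < n) (t : ℕ) : Fin k × Fin n :=
  (⟨(t / n) % k, Nat.mod_lt _ hk0⟩, ⟨pos n (t % n), pos_lt n (t % n) hn0⟩)

lemma sig_adj (hk : 5 ≤ k) (hn : 3 ≤ n) (hk0 : 0 < k) (hn0 : 0 < n) (t : ℕ) :
    (stG k n).Adj (sig k n hk0 hn0 t) (sig k n hk0 hn0 (t + 1)) := by
  have hr : t % n < n := Nat.mod_lt _ hn0
  by_cases hb : t % n + 1 < n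
  · obtain ⟨hm, hd⟩ := succ_mod_div_lt hb
    left
    constructor
    · apply Fin.ext
      show (t / n) % k = ((t + 1) / n) % k
      rw [hd]
    · intro hcon
      have hval : pos n (t % n) = pos n ((t + 1) % n) := congrArg Fin.val hcon
      rw [hm] at hval
      have := pos_inj n hr (by omega) hval
      omega
  · have hb2 : t % n + 1 = n := by omega
    obtain ⟨hm, hd⟩ := succ_mod_div_eq hn0 hb2
    right; left
    refine ⟨?_, ?_, ?_⟩
    · apply Fin.ext
      rw [fin_val_add_one k hk]
      show ((t + 1) / n) % k = ((t / n) % k + 1) % k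
      rw [hd, Nat.add_mod, show (1 : ℕ) % k = 1 from Nat.mod_eq_of_lt (by omega)]
    · show pos n (t % n) = 1
      unfold pos
      rw [if_neg (by omega)]
      omega
    · show pos n ((t + 1) % n) = 0
      rw [hm]
      rfl

lemma sig_inj (hk0 : 0 < k) (hn0 : 0 < n) {t s : ℕ} (ht : t < k * n) (hs : s < k * n)
    (h : sig k n hk0 hn0 t = sig k n hk0 hn0 s) : t = s := by
  have h1 : (t / n) % k = (s / n) % k := congrArg (fun p => p.1.val) h
  have h2 : pos n (t % n) = pos n (s % n) := congrArg (fun p => p.2.val) h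
  have ht' : t / n < k := (Nat.div_lt_iff_lt_mul hn0).mpr (by omega)
  have hs' : s / n < k := (Nat.div_lt_iff_lt_mul hn0).mpr (by omega)
  rw [Nat.mod_eq_of_lt ht', Nat.mod_eq_of_lt hs'] at h1
  have h3 := pos_inj n (Nat.mod_lt _ hn0) (Nat.mod_lt _ hn0) h2
  rw [← Nat.div_add_mod t n, ← Nat.div_add_mod s n, h1, h3]

lemma ham (hk : 5 ≤ k) (hn : 3 ≤ n) : (stG k n).IsHamiltonian := by
  have hk0 : 0 < k := by omega
  have hn0 : 0 < n := by omega
  have hkn : 0 < k * n := Nat.mul_pos hk0 hn0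
  intro _
  set σ : ℕ → Fin k × Fin n := sig k n hk0 hn0 with hσ
  set u0 : Fin k × Fin n := σ 0 with hu0
  set T : List (Fin k × Fin n) := (List.range (k * n)).map (fun t => σ (t + 1)) with hT
  have hq1 : k * n / n = k := Nat.mul_div_cancel _ hn0
  have hsig_last : σ (k * n) = u0 := by
    rw [hσ, hu0]
    refine Prod.ext (Fin.ext ?_) (Fin.ext ?_)
    · show k * n / n % k = 0 / n % k
      rw [hq1, Nat.mod_self, Nat.zero_div, Nat.zero_mod]
    · show pos n (k * n % n) = pos n (0 % n)
      rw [Nat.mul_mod_left, Nat.zero_mod]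
  have hchain' : List.Chain' (stG k n).Adj ((List.range (k * n + 1)).map σ) := by
    show List.IsChain (stG k n).Adj _
    rw [List.isChain_map, List.isChain_range_succ]
    intro m _
    exact sig_adj k n hk hn hk0 hn0 m
  have hlist : (List.range (k * n + 1)).map σ = u0 :: T := by
    rw [List.range_succ_eq_map, List.map_cons, List.map_map]
    rfl
  have hchain : List.Chain (stG k n).Adj u0 T := by
    rw [hlist] at hchain'
    exact hchain'
  have hkn1 : k * n = (k * n - 1) + 1 := by omega
  have hTlast : T.getLastD u0 = u0 := by
    rw [hT, hkn1, List.range_succ, List.map_append, List.map_singleton,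
      List.getLastD_concat, ← hkn1, hsig_last]
  let w : (stG k n).Walk u0 u0 := (fromChain T hchain).copy rfl hTlast
  have hsupp : w.support = u0 :: T := by
    show ((fromChain T hchain).copy rfl hTlast).support = u0 :: T
    rw [SimpleGraph.Walk.support_copy, fromChain_support]
  have hLnodup : ((List.range (k * n)).map σ).Nodup := by
    apply List.Nodup.map_on ?_ List.nodup_range
    intro x hx y hy hxy
    exact sig_inj k n hk0 hn0 (List.mem_range.mp hx) (List.mem_range.mp hy) hxy
  have hperm : T.Perm ((List.range (k * n)).map σ) := by
    have h1 : (List.range (k * n)).map σ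
        = u0 :: ((List.range (k * n - 1)).map (fun t => σ (t + 1))) := by
      rw [hkn1, List.range_succ_eq_map, List.map_cons, List.map_map]
      rfl
    have h2 : T = ((List.range (k * n - 1)).map (fun t => σ (t + 1))) ++ [u0] := by
      rw [hT, hkn1, List.range_succ, List.map_append]
      congr 1
      rw [List.map_singleton, ← hkn1, hsig_last]
    rw [h1, h2]
    exact List.perm_append_singleton _ _
  have hTnodup : T.Nodup := hperm.nodup_iff.mpr hLnodup
  have hTlen : T.length = k * n := by simp [hT]
  have hTuniv : ∀ a, a ∈ T := by
    have hcard : T.toFinset = Finset.univ := by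
      apply Finset.eq_univ_of_card
      rw [List.toFinset_card_of_nodup hTnodup, hTlen, Fintype.card_prod,
        Fintype.card_fin, Fintype.card_fin]
    intro a
    rw [← List.mem_toFinset, hcard]
    exact Finset.mem_univ a
  have hwlen : w.length = k * n := by
    have h1 := w.length_support
    rw [hsupp] at h1
    simp only [List.length_cons, hTlen] at h1
    omega
  have hcyc : w.IsCycle := by
    apply closed_isCycle
    · rw [hsupp]
      simpa using hTnodup
    · rw [hwlen]
      have : 15 ≤ k * n := Nat.mul_le_mul hk hn
      omega
  refine ⟨u0, w, ?_⟩
  rw [SimpleGraph.Walk.isHamiltonianCycle_iff_isCycle_and_support_count_tail_eq_one]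
  refine ⟨hcyc, fun a => ?_⟩
  rw [hsupp]
  simp only [List.tail_cons]
  exact @List.count_eq_one_of_mem _ instBEqOfDecidableEq _ _ _ hTnodup (hTuniv a)

end Ham

end St18

/-- For every integer `k ≥ 5` there is a graph `G` on `k(k − 2)` vertices
that is Hamiltonian, has independence number exactly `k`, and contains no cycle of length
`k − 1`. -/
theorem statement18 (k : ℕ) (hk : 5 ≤ k) :
    ∃ (V : Type) (_ : Fintype V) (_ : DecidableEq V) (G : SimpleGraph V),
      Fintype.card V = k * (k - 2) ∧
      G.IsHamiltonian ∧
      IsGreatest {m : ℕ | ∃ s : Finset V,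
        (∀ u ∈ s, ∀ v ∈ s, u ≠ v → ¬ G.Adj u v) ∧ s.card = m} k ∧
      ¬ ∃ (u : V) (w : G.Walk u u), w.IsCycle ∧ w.length = k - 1 := by
  have hn3 : 3 ≤ k - 2 := by omega
  haveI : NeZero k := ⟨by omega⟩
  refine ⟨Fin k × Fin (k - 2), inferInstance, inferInstance, St18.stG k (k - 2),
    ?_, ?_, ?_, ?_⟩
  · rw [Fintype.card_prod, Fintype.card_fin, Fintype.card_fin]
  · exact St18.ham k (k - 2) hk hn3
  · exact St18.indep_greatest k (k - 2) hk hn3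
  · exact St18.no_cycle k (k - 2) hk hn3 rfl
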